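/- arXiv:2505.21430 — 2 statements merged into one kernel-verified Lean document; each statement's English description precedes it below -/
import Mathlib

section
/- Let ℓ(w) = Σ_{i=1}^n q_i · max{0, 1 − y_i (x_i · w)/γ} with q_i ≥ 0, γ > 0. Suppose ŵ ∈ ℝ^d, g is a subgradient of ℓ at ŵ, ẑ is a subgradient of the L1 norm at ŵ, λ₁, λ₂ ≥ 0 with λ₁ + λ₂ > 0, and g + λ₁ẑ + λ₂ŵ = 0. Assume the boundary conditions ẑ·ŵ = ‖ŵ‖₁ = √s and ŵ·ŵ = ‖ŵ‖₂² = 1 whenever λ₁ > 0 and λ₂ > 0 respectively hold. Define κ = (λ₁ ẑ + λ₂ ŵ)/(√s λ₁ + λ₂) and w' = w* − ŵ·⟨w*, κ⟩ for any w* ∈ ℝ^d. Then g · w' = 0. -/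
/-- KKT orthogonality construction: with stationarity `g + λ₁ẑ + λ₂ŵ = 0` and
complementary slackness, the correction vector `w' = w* − ŵ⟨w*,κ⟩` with
`κ = (λ₁ẑ + λ₂ŵ)/(√s λ₁ + λ₂)` satisfies `g · w' = 0`. -/
theorem stmt5 (d n : ℕ) (s γ : ℝ) (hs : 0 < s) (hγ : 0 < γ)
    (q : Fin n → ℝ) (hq : ∀ i, 0 ≤ q i)
    (x : Fin n → Fin d → ℝ) (y : Fin n → ℝ)
    (g zhat what wstar : Fin d → ℝ) (lam1 lam2 : ℝ)
    (hlam1 : 0 ≤ lam1) (hlam2 : 0 ≤ lam2) (hlam : 0 < lam1 + lam2)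
    (hg : ∀ w : Fin d → ℝ,
      ∑ i, q i * max 0 (1 - y i * (∑ j, x i j * w j) / γ) ≥
      ∑ i, q i * max 0 (1 - y i * (∑ j, x i j * what j) / γ)
        + ∑ j, g j * (w j - what j))
    (hz : ∀ w : Fin d → ℝ, ∑ j, |w j| ≥ ∑ j, |what j| + ∑ j, zhat j * (w j - what j))
    (hstat : ∀ j, g j + lam1 * zhat j + lam2 * what j = 0)
    (hb1 : 0 < lam1 → ∑ j, zhat j * what j = Real.sqrt s ∧ ∑ j, |what j| = Real.sqrt s)
    (hb2 : 0 < lam2 → ∑ j, what j * what j = 1)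
    (κ : Fin d → ℝ)
    (hκ : ∀ j, κ j = (lam1 * zhat j + lam2 * what j) / (Real.sqrt s * lam1 + lam2))
    (w' : Fin d → ℝ)
    (hw' : ∀ j, w' j = wstar j - what j * (∑ k, wstar k * κ k)) :
    ∑ j, g j * w' j = 0 := by
  have hsqs : 0 < Real.sqrt s := Real.sqrt_pos.2 hs
  set c := Real.sqrt s * lam1 + lam2 with hc
  have hcpos : 0 < c := by
    rcases lt_or_eq_of_le hlam1 with h1 | h1
    · exact add_pos_of_pos_of_nonneg (mul_pos hsqs h1) hlam2
    · have h2 : 0 < lam2 := by linarith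
      nlinarith
  have hgj : ∀ j, g j = -(lam1 * zhat j + lam2 * what j) := fun j => by
    linarith [hstat j]
  -- g · ŵ = -c
  have hgw : ∑ j, g j * what j = -c := by
    have hexp : ∑ j, g j * what j
        = -(lam1 * ∑ j, zhat j * what j + lam2 * ∑ j, what j * what j) := by
      simp only [hgj]
      rw [Finset.mul_sum, Finset.mul_sum, ← Finset.sum_add_distrib]
      rw [← Finset.sum_neg_distrib]
      exact Finset.sum_congr rfl fun j _ => by ring
    rcases lt_or_eq_of_le hlam1 with h1 | h1
    · rcases lt_or_eq_of_le hlam2 with h2 | h2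
      · rw [hexp, (hb1 h1).1, hb2 h2, hc]; ring
      · rw [hexp, (hb1 h1).1, hc, ← h2]; ring
    · have h2 : 0 < lam2 := by linarith
      rw [hexp, hb2 h2, hc, ← h1]; ring
  -- w* · κ = -(g·w*)/c
  have hT : ∑ k, wstar k * κ k = -(∑ k, g k * wstar k) / c := by
    have hk : ∀ k, wstar k * κ k = -(g k * wstar k) / c := fun k => by
      rw [hκ k, hgj k]
      field_simp
    simp only [hk]
    rw [← Finset.sum_div, ← Finset.sum_neg_distrib]
  have hfinal : ∑ j, g j * w' j
      = ∑ j, g j * wstar j - (∑ j, g j * what j) * (∑ k, wstar k * κ k) := by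
    simp only [hw', mul_sub]
    rw [Finset.sum_sub_distrib, Finset.sum_mul]
    congr 1
    exact Finset.sum_congr rfl fun j _ => by ring
  rw [hfinal, hgw, hT]
  field_simp
  ring
end

section
/- Let a₁,…,a_n be independent Rademacher random variables and x₁,…,x_n ∈ ℝ^d given vectors. Then E_a[ sup_{‖w‖₁ ≤ t} Σ_{i=1}^n a_i (w · x_i) ] ≤ t √(2n log(2d)) · max_{1≤i≤n} ‖x_i‖_∞. -/
open MeasureTheory

section aux

open Real ProbabilityTheory Finset

variable {Ω : Type*} [MeasurableSpace Ω] {P : Measure Ω} [IsProbabilityMeasure P]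

/-- MGF of a single Rademacher variable. -/
lemma rad_mgf (a : Ω → ℝ) (ha : Measurable a)
    (hval : ∀ ω, a ω = 1 ∨ a ω = -1) (hrad : P {ω | a ω = 1} = 1/2) (s : ℝ) :
    ∫ ω, Real.exp (s * a ω) ∂P = Real.cosh s := by
  have hA : MeasurableSet {ω | a ω = 1} := ha (measurableSet_singleton 1)
  have hfun : (fun ω => Real.exp (s * a ω)) =
      (({ω | a ω = 1} : Set Ω).indicator (fun _ => Real.exp s)) +
      (({ω | a ω = 1} : Set Ω)ᶜ.indicator (fun _ => Real.exp (-s))) := by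
    funext ω
    rcases hval ω with h | h
    · simp [Set.indicator_apply, Set.mem_setOf_eq, h]
    · have h1 : a ω ≠ 1 := by rw [h]; norm_num
      simp only [Set.indicator_apply, Set.mem_setOf_eq, Set.mem_compl_iff, h1, if_false,
        if_true, Pi.add_apply, h, mul_neg_one]
      norm_num
  have hcompl : P ({ω | a ω = 1} : Set Ω)ᶜ = 1/2 := by
    rw [prob_compl_eq_one_sub hA, hrad]
    rw [ENNReal.sub_eq_of_eq_add (by norm_num)]
    exact (ENNReal.add_halves 1).symm
  rw [hfun]
  rw [integral_add' ((integrable_const _).indicator hA)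
      ((integrable_const _).indicator hA.compl),
    integral_indicator_const _ hA, integral_indicator_const _ hA.compl,
    measureReal_def, measureReal_def, hrad, hcompl, Real.cosh_eq]
  norm_num
  ring


/-- MGF bound for a weighted sum of independent Rademachers. -/
lemma sum_exp_bound {n : ℕ} (a : Fin n → Ω → ℝ) (hmeas : ∀ i, Measurable (a i))
    (hindep : ProbabilityTheory.iIndepFun a P)
    (hval : ∀ i ω, a i ω = 1 ∨ a i ω = -1)
    (hrad : ∀ i, P {ω | a i ω = 1} = 1/2)
    (s : Fin n → ℝ) (M l : ℝ) (hs : ∀ i, |s i| ≤ M) :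
    ∫ ω, Real.exp (l * ∑ i, a i ω * s i) ∂P ≤ Real.exp (l^2 * M^2 / 2) ^ n := by
  set Y : Fin n → Ω → ℝ := fun i ω => a i ω * s i with hY
  have hYm : ∀ i, Measurable (Y i) := fun i => (hmeas i).mul_const _
  have hYindep : iIndepFun Y P :=
    hindep.comp (fun i y => y * s i) (fun i => measurable_mul_const _)
  have h1 : ∫ ω, Real.exp (l * ∑ i, a i ω * s i) ∂P = mgf (∑ i, Y i) P l := by
    rw [mgf]
    congr 1
    funext ω
    simp only [Finset.sum_apply, hY]
  rw [h1, hYindep.mgf_sum hYm]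
  calc ∏ i, mgf (Y i) P l ≤ ∏ _i : Fin n, Real.exp (l^2 * M^2 / 2) := by
        refine Finset.prod_le_prod (fun i _ => mgf_nonneg) (fun i _ => ?_)
        have hmg : mgf (Y i) P l = Real.cosh (l * s i) := by
          rw [mgf, ← rad_mgf (P := P) (a i) (hmeas i) (hval i) (hrad i) (l * s i)]
          congr 1
          funext ω
          simp only [hY]; ring
        rw [hmg]
        refine (Real.cosh_le_exp_half_sq _).trans (Real.exp_le_exp.2 ?_)
        have h2 : (s i)^2 ≤ M^2 := sq_le_sq' ((abs_le.1 (hs i)).1) (le_of_abs_le (hs i))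
        nlinarith [sq_nonneg l]
    _ = Real.exp (l^2 * M^2 / 2) ^ n := by
        rw [Finset.prod_const, Finset.card_univ, Fintype.card_fin]


/-- Massart-style bound: Jensen + union bound. -/
lemma expectation_sup_le {κ : Type*} [Fintype κ] [Nonempty κ] (Z : κ → Ω → ℝ)
    (hZm : ∀ k, Measurable (Z k)) (R : ℝ) (hR : ∀ k ω, |Z k ω| ≤ R)
    (l A : ℝ) (hl : 0 < l) (hA : 0 < A)
    (hmgf : ∀ k, ∫ ω, Real.exp (l * Z k ω) ∂P ≤ A) :
    ∫ ω, Finset.univ.sup' Finset.univ_nonempty (fun k => Z k ω) ∂P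
      ≤ Real.log ((Fintype.card κ : ℝ) * A) / l := by
  set m : Ω → ℝ := fun ω => Finset.univ.sup' Finset.univ_nonempty (fun k => Z k ω) with hm
  have hm_meas : Measurable m := by
    have h := Finset.measurable_sup' (Finset.univ_nonempty (α := κ)) (fun k _ => hZm k)
    have he : m = Finset.univ.sup' Finset.univ_nonempty Z := by
      funext ω
      simp [hm, Finset.sup'_apply]
    rw [he]
    exact h
  have hm_bdd : ∀ ω, |m ω| ≤ R := by
    intro ω
    obtain ⟨k₀⟩ := ‹Nonempty κ›
    show |Finset.univ.sup' Finset.univ_nonempty (fun k => Z k ω)| ≤ R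
    rw [abs_le]
    constructor
    · exact le_trans (abs_le.1 (hR k₀ ω)).1 (Finset.le_sup' (fun k => Z k ω) (Finset.mem_univ k₀))
    · exact Finset.sup'_le _ _ fun k _ => le_of_abs_le (hR k ω)
  have hm_int : Integrable m P :=
    (integrable_const R).mono' hm_meas.aestronglyMeasurable
      (Filter.Eventually.of_forall fun ω => by simpa using hm_bdd ω)
  have hgm_meas : Measurable (fun ω => Real.exp (l * m ω)) :=
    (hm_meas.const_mul l).exp
  have hgm_bdd : ∀ ω, Real.exp (l * m ω) ≤ Real.exp (l * R) := fun ω =>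
    Real.exp_le_exp.2 (mul_le_mul_of_nonneg_left
      (le_of_abs_le (hm_bdd ω)) hl.le)
  have hgm_int : Integrable (fun ω => Real.exp (l * m ω)) P :=
    (integrable_const (Real.exp (l * R))).mono' hgm_meas.aestronglyMeasurable
      (Filter.Eventually.of_forall fun ω => by
        rw [Real.norm_eq_abs, abs_of_pos (Real.exp_pos _)]; exact hgm_bdd ω)
  -- convexity of y ↦ exp (l*y)
  have hconv : ConvexOn ℝ Set.univ (fun y : ℝ => Real.exp (l * y)) := by
    have h := (convexOn_exp).comp_affineMap
      ((l • LinearMap.id : ℝ →ₗ[ℝ] ℝ)).toAffineMap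
    have h2 : (fun y : ℝ => Real.exp (l * y)) = rexp ∘ (l • id) := by
      funext y; simp [Function.comp, smul_eq_mul]
    rw [h2]; simpa using h
  -- Jensen
  have hjensen : Real.exp (l * ∫ ω, m ω ∂P) ≤ ∫ ω, Real.exp (l * m ω) ∂P := by
    have h := hconv.map_integral_le
      ((Real.continuous_exp.comp (continuous_const.mul continuous_id)).continuousOn)
      isClosed_univ (Filter.Eventually.of_forall fun _ => Set.mem_univ _) hm_int
      (by exact hgm_int)
    simpa [Function.comp] using h
  -- union bound
  have hZk_int : ∀ k, Integrable (fun ω => Real.exp (l * Z k ω)) P := fun k =>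
    (integrable_const (Real.exp (l * R))).mono'
      ((hZm k).const_mul l).exp.aestronglyMeasurable
      (Filter.Eventually.of_forall fun ω => by
        rw [Real.norm_eq_abs, abs_of_pos (Real.exp_pos _)]
        exact Real.exp_le_exp.2 (mul_le_mul_of_nonneg_left (le_of_abs_le (hR k ω)) hl.le))
  have hunion : ∫ ω, Real.exp (l * m ω) ∂P ≤ (Fintype.card κ : ℝ) * A := by
    have hptw : ∀ ω, Real.exp (l * m ω) ≤ ∑ k : κ, Real.exp (l * Z k ω) := by
      intro ω
      obtain ⟨k, _, hk⟩ := Finset.exists_mem_eq_sup' (Finset.univ_nonempty (α := κ))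
        (fun k => Z k ω)
      calc Real.exp (l * m ω) = Real.exp (l * Z k ω) := by
            rw [show m ω = Z k ω from hk]
        _ ≤ ∑ j : κ, Real.exp (l * Z j ω) :=
          Finset.single_le_sum (f := fun j => Real.exp (l * Z j ω))
            (fun j _ => (Real.exp_pos _).le) (Finset.mem_univ k)
    calc ∫ ω, Real.exp (l * m ω) ∂P ≤ ∫ ω, ∑ k : κ, Real.exp (l * Z k ω) ∂P :=
          integral_mono hgm_int (integrable_finset_sum _ fun k _ => hZk_int k)
            fun ω => hptw ω
      _ = ∑ k : κ, ∫ ω, Real.exp (l * Z k ω) ∂P :=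
          integral_finset_sum _ fun k _ => hZk_int k
      _ ≤ ∑ _k : κ, A := Finset.sum_le_sum fun k _ => hmgf k
      _ = (Fintype.card κ : ℝ) * A := by
          rw [Finset.sum_const, Finset.card_univ, nsmul_eq_mul]
  have hcard : (0:ℝ) < (Fintype.card κ : ℝ) * A := by
    have : 0 < Fintype.card κ := Fintype.card_pos
    positivity
  have hlog : l * ∫ ω, m ω ∂P ≤ Real.log ((Fintype.card κ : ℝ) * A) := by
    have h := Real.log_le_log (Real.exp_pos _) (hjensen.trans hunion)
    rwa [Real.log_exp] at h
  rw [le_div_iff₀ hl]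
  linarith [hlog]

end aux

/-- Rademacher complexity of L1-constrained linear functionals:
`E_a[sup_{‖w‖₁ ≤ t} Σᵢ aᵢ (w·xᵢ)] ≤ t √(2n log(2d)) · maxᵢ ‖xᵢ‖_∞`,
stated with `M` an upper bound on `maxᵢ ‖xᵢ‖_∞`. -/
theorem stmt18 {Ω : Type*} [MeasurableSpace Ω] (P : Measure Ω)
    [IsProbabilityMeasure P] (n d : ℕ) (hn : 0 < n) (hd : 0 < d)
    (a : Fin n → Ω → ℝ) (hmeas : ∀ i, Measurable (a i))
    (hindep : ProbabilityTheory.iIndepFun a P)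
    (hval : ∀ i ω, a i ω = 1 ∨ a i ω = -1)
    (hrad : ∀ i, P {ω | a i ω = 1} = 1/2)
    (x : Fin n → Fin d → ℝ) (t M : ℝ) (ht : 0 ≤ t)
    (hM : ∀ i j, |x i j| ≤ M) :
    ∫ ω, sSup {v : ℝ | ∃ w : Fin d → ℝ, (∑ j, |w j|) ≤ t ∧
        v = ∑ i, a i ω * (∑ j, w j * x i j)} ∂P
      ≤ t * Real.sqrt (2 * n * Real.log (2 * d)) * M := by
  classical
  have hM0 : 0 ≤ M := le_trans (abs_nonneg _) (hM ⟨0, hn⟩ ⟨0, hd⟩)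
  set c : Fin d → Ω → ℝ := fun j ω => ∑ i, a i ω * x i j with hc
  have hcmeas : ∀ j, Measurable (c j) := fun j =>
    Finset.measurable_sum _ fun i _ => (hmeas i).mul_const _
  haveI : Nonempty (Fin d) := ⟨⟨0, hd⟩⟩
  set Z : Fin d × Bool → Ω → ℝ := fun k ω => (if k.2 then (1:ℝ) else -1) * c k.1 ω with hZ
  have hZm : ∀ k, Measurable (Z k) := fun k => (hcmeas k.1).const_mul _
  set m : Ω → ℝ := fun ω => Finset.univ.sup' Finset.univ_nonempty (fun k => Z k ω) with hm
  -- |c j ω| ≤ m ω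
  have habs : ∀ ω j, |c j ω| ≤ m ω := by
    intro ω j
    have h1 : c j ω ≤ m ω := by
      have h : Z (j, true) ω ≤ m ω :=
        Finset.le_sup' (fun k : Fin d × Bool => Z k ω) (Finset.mem_univ (j, true))
      have h' : Z (j, true) ω = c j ω := by simp [hZ]
      rwa [h'] at h
    have h2 : -(c j ω) ≤ m ω := by
      have h : Z (j, false) ω ≤ m ω :=
        Finset.le_sup' (fun k : Fin d × Bool => Z k ω) (Finset.mem_univ (j, false))
      have h' : Z (j, false) ω = -(c j ω) := by simp [hZ]
      rwa [h'] at h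
    exact abs_le.2 ⟨neg_le.1 h2, h1⟩
  have hm0 : ∀ ω, 0 ≤ m ω := fun ω => le_trans (abs_nonneg _) (habs ω ⟨0, hd⟩)
  -- rewrite of the linear functional
  have hrwW : ∀ ω (w : Fin d → ℝ),
      ∑ i, a i ω * (∑ j, w j * x i j) = ∑ j, w j * c j ω := by
    intro ω w
    calc ∑ i, a i ω * (∑ j, w j * x i j)
        = ∑ i, ∑ j, w j * (a i ω * x i j) := by
          refine Finset.sum_congr rfl fun i _ => ?_
          rw [Finset.mul_sum]
          exact Finset.sum_congr rfl fun j _ => by ring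
      _ = ∑ j, ∑ i, w j * (a i ω * x i j) := Finset.sum_comm
      _ = ∑ j, w j * c j ω := by
          refine Finset.sum_congr rfl fun j _ => ?_
          simp only [hc, Finset.mul_sum]
  -- membership of 0
  have hS0 : ∀ ω, (0:ℝ) ∈ {v : ℝ | ∃ w : Fin d → ℝ, (∑ j, |w j|) ≤ t ∧
      v = ∑ i, a i ω * (∑ j, w j * x i j)} := by
    intro ω
    refine ⟨fun _ => 0, by simpa using ht, by simp⟩
  have hub : ∀ ω v, v ∈ {v : ℝ | ∃ w : Fin d → ℝ, (∑ j, |w j|) ≤ t ∧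
      v = ∑ i, a i ω * (∑ j, w j * x i j)} → v ≤ t * m ω := by
    rintro ω v ⟨w, hw, rfl⟩
    rw [hrwW ω w]
    calc ∑ j, w j * c j ω ≤ ∑ j, |w j| * m ω := by
          refine Finset.sum_le_sum fun j _ => ?_
          refine le_trans (le_abs_self _) ?_
          rw [abs_mul]
          exact mul_le_mul_of_nonneg_left (habs ω j) (abs_nonneg _)
      _ = (∑ j, |w j|) * m ω := by rw [Finset.sum_mul]
      _ ≤ t * m ω := mul_le_mul_of_nonneg_right hw (hm0 ω)
  have hbound : ∀ ω, sSup {v : ℝ | ∃ w : Fin d → ℝ, (∑ j, |w j|) ≤ t ∧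
      v = ∑ i, a i ω * (∑ j, w j * x i j)} ≤ t * m ω := fun ω =>
    csSup_le ⟨0, hS0 ω⟩ (hub ω)
  have hnn : ∀ ω, 0 ≤ sSup {v : ℝ | ∃ w : Fin d → ℝ, (∑ j, |w j|) ≤ t ∧
      v = ∑ i, a i ω * (∑ j, w j * x i j)} := fun ω =>
    le_csSup ⟨t * m ω, fun v hv => hub ω v hv⟩ (hS0 ω)
  by_cases hMz : M = 0
  · -- degenerate case
    have hx0 : ∀ i j, x i j = 0 := fun i j =>
      abs_eq_zero.1 (le_antisymm (hMz ▸ hM i j) (abs_nonneg _))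
    have hmz : ∀ ω, m ω = 0 := by
      intro ω
      have h0 : ∀ k : Fin d × Bool, Z k ω = 0 := fun k => by
        simp [hZ, hc, hx0]
      simp [hm, h0]
    have hmain : ∫ ω, sSup {v : ℝ | ∃ w : Fin d → ℝ, (∑ j, |w j|) ≤ t ∧
        v = ∑ i, a i ω * (∑ j, w j * x i j)} ∂P ≤ ∫ _ω, (0:ℝ) ∂P := by
      refine integral_mono_of_nonneg (Filter.Eventually.of_forall hnn)
        (integrable_const 0) (Filter.Eventually.of_forall fun ω => ?_)
      have h := hbound ω
      rwa [hmz ω, mul_zero] at h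
    simpa [hMz] using hmain
  · have hMpos : 0 < M := lt_of_le_of_ne hM0 (Ne.symm hMz)
    -- bounds on Z
    have hcbd : ∀ j ω, |c j ω| ≤ (n:ℝ) * M := by
      intro j ω
      calc |c j ω| ≤ ∑ i, |a i ω * x i j| := by
            simp only [hc]; exact Finset.abs_sum_le_sum_abs _ _
        _ ≤ ∑ _i : Fin n, M := by
            refine Finset.sum_le_sum fun i _ => ?_
            rw [abs_mul]
            have h1 : |a i ω| = 1 := by rcases hval i ω with h | h <;> simp [h]
            rw [h1, one_mul]; exact hM i j
        _ = (n:ℝ) * M := by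
            rw [Finset.sum_const, Finset.card_univ, Fintype.card_fin, nsmul_eq_mul]
    have hR : ∀ k ω, |Z k ω| ≤ (n:ℝ) * M := by
      intro k ω
      have h1 : |(if k.2 then (1:ℝ) else -1)| = 1 := by cases k.2 <;> norm_num
      calc |Z k ω| = |c k.1 ω| := by rw [hZ]; rw [abs_mul, h1, one_mul]
        _ ≤ (n:ℝ) * M := hcbd k.1 ω
    -- integrability of m
    have hm_meas : Measurable m := by
      have h := Finset.measurable_sup' (Finset.univ_nonempty (α := Fin d × Bool))
        (fun k _ => hZm k)
      have he : m = Finset.univ.sup' Finset.univ_nonempty Z := by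
        funext ω; simp [hm, Finset.sup'_apply]
      rw [he]; exact h
    have hm_bdd : ∀ ω, |m ω| ≤ (n:ℝ) * M := by
      intro ω
      rw [abs_le]
      exact ⟨le_trans (abs_le.1 (hR (⟨0, hd⟩, true) ω)).1
          (Finset.le_sup' (fun k : Fin d × Bool => Z k ω) (Finset.mem_univ _)),
        Finset.sup'_le _ _ fun k _ => le_of_abs_le (hR k ω)⟩
    have hm_int : Integrable m P :=
      (integrable_const ((n:ℝ) * M)).mono' hm_meas.aestronglyMeasurable
        (Filter.Eventually.of_forall fun ω => by simpa using hm_bdd ω)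
    -- constants
    set L := Real.log (2 * (d:ℝ)) with hL
    have hLpos : 0 < L := Real.log_pos (by
      have h1 : (1:ℝ) ≤ (d:ℝ) := by exact_mod_cast hd
      linarith)
    set sn := Real.sqrt (n:ℝ) with hsn
    have hsnpos : 0 < sn := Real.sqrt_pos.2 (by exact_mod_cast hn)
    set s2 := Real.sqrt (2 * L) with hs2
    have hs2pos : 0 < s2 := Real.sqrt_pos.2 (by linarith)
    set l := s2 / (sn * M) with hldef
    have hlpos : 0 < l := div_pos hs2pos (mul_pos hsnpos hMpos)
    set A := Real.exp (l^2 * M^2 / 2) ^ n with hAdef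
    have hApos : 0 < A := pow_pos (Real.exp_pos _) n
    -- mgf bound
    have hmgf : ∀ k : Fin d × Bool, ∫ ω, Real.exp (l * Z k ω) ∂P ≤ A := by
      intro k
      have hsk : ∀ i, |(if k.2 then (1:ℝ) else -1) * x i k.1| ≤ M := by
        intro i
        rw [abs_mul]
        have h1 : |(if k.2 then (1:ℝ) else -1)| = 1 := by cases k.2 <;> norm_num
        rw [h1, one_mul]; exact hM i k.1
      have heq : ∀ ω, Z k ω = ∑ i, a i ω * ((if k.2 then (1:ℝ) else -1) * x i k.1) := by
        intro ω
        simp only [hZ, hc, Finset.mul_sum]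
        exact Finset.sum_congr rfl fun i _ => by ring
      have h := sum_exp_bound (P := P) a hmeas hindep hval hrad
        (fun i => (if k.2 then (1:ℝ) else -1) * x i k.1) M l hsk
      rw [hAdef]
      calc ∫ ω, Real.exp (l * Z k ω) ∂P
          = ∫ ω, Real.exp (l * ∑ i, a i ω * ((if k.2 then (1:ℝ) else -1) * x i k.1)) ∂P := by
            simp only [heq]
        _ ≤ Real.exp (l^2 * M^2 / 2) ^ n := h
    have hkey := expectation_sup_le (P := P) Z hZm ((n:ℝ) * M) hR l A hlpos hApos hmgf
    -- simplify the log
    have hcard : (Fintype.card (Fin d × Bool) : ℝ) = 2 * (d:ℝ) := by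
      rw [Fintype.card_prod, Fintype.card_fin, Fintype.card_bool]
      push_cast; ring
    have hAexp : A = Real.exp ((n:ℝ) * (l^2 * M^2 / 2)) := by
      rw [hAdef, ← Real.exp_nat_mul]
    have hn2 : (n:ℝ) = sn^2 := (Real.sq_sqrt (by positivity)).symm
    have hLs : 2 * L = s2^2 := (Real.sq_sqrt (by linarith)).symm
    have hlogeq : Real.log ((Fintype.card (Fin d × Bool) : ℝ) * A)
        = L + (n:ℝ) * (l^2 * M^2 / 2) := by
      rw [hAexp, Real.log_mul (by rw [hcard]; positivity) (Real.exp_ne_zero _),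
        Real.log_exp, hcard, hL]
    have harith : (L + (n:ℝ) * (l^2 * M^2 / 2)) / l = sn * s2 * M := by
      rw [hn2, hldef]
      have hLval : L = s2^2 / 2 := by linarith
      rw [hLval]
      field_simp
      ring
    have hEm : ∫ ω, m ω ∂P ≤ sn * s2 * M := by
      have h := hkey
      rw [hlogeq, harith] at h
      exact h
    -- final chain
    have hsq : Real.sqrt (2 * (n:ℝ) * L) = sn * s2 := by
      rw [show (2 * (n:ℝ) * L) = (n:ℝ) * (2 * L) by ring,
        Real.sqrt_mul (by positivity)]
    calc ∫ ω, sSup {v : ℝ | ∃ w : Fin d → ℝ, (∑ j, |w j|) ≤ t ∧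
          v = ∑ i, a i ω * (∑ j, w j * x i j)} ∂P
        ≤ ∫ ω, t * m ω ∂P :=
          integral_mono_of_nonneg (Filter.Eventually.of_forall hnn)
            (hm_int.const_mul t) (Filter.Eventually.of_forall hbound)
      _ = t * ∫ ω, m ω ∂P := integral_const_mul t m
      _ ≤ t * (sn * s2 * M) := mul_le_mul_of_nonneg_left hEm ht
      _ = t * Real.sqrt (2 * (n:ℝ) * L) * M := by rw [hsq]; ring
end
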